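/- For every θ ∈ [0,1], the set G₁ = {y ∈ Δ² : y₁ ≥ y₂ ≥ y₃} is invariant under V_θ (i.e. V_θ(G₁) ⊆ G₁). Moreover, for every θ ∈ [0,1] with θ ≠ 2/3, the set of fixed points of V_θ on Δ² is exactly 𝒜 = {(1,0,0),(0,1,0),(0,0,1),(1/2,1/2,0),(1/2,0,1/2),(0,1/2,1/2),(1/3,1/3,1/3)}. -/

import Mathlib

open MeasureTheory ProbabilityTheory Filter Topology
open scoped ENNReal

noncomputable section

/-- The cubic stochastic operator `V_θ`, regarded as a map on (Euclidean) `ℝ³`. -/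
def Vcso (θ : ℝ) (x : EuclideanSpace ℝ (Fin 3)) : EuclideanSpace ℝ (Fin 3) :=
  WithLp.toLp 2 ![x 0 * ((x 0)^2 + 3*θ*(x 0)*(x 1 + x 2) + 3*(1-θ)*((x 1)^2 + (x 2)^2) + 2*(x 1)*(x 2)),
    x 1 * ((x 1)^2 + 3*θ*(x 1)*(x 2 + x 0) + 3*(1-θ)*((x 2)^2 + (x 0)^2) + 2*(x 2)*(x 0)),
    x 2 * ((x 2)^2 + 3*θ*(x 2)*(x 0 + x 1) + 3*(1-θ)*((x 0)^2 + (x 1)^2) + 2*(x 0)*(x 1))]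

/-- The simplex `Δ² = {x ∈ ℝ³ : x₁,x₂,x₃ ≥ 0, x₁+x₂+x₃ = 1}`. -/
def simplex2 : Set (EuclideanSpace ℝ (Fin 3)) :=
  {x | 0 ≤ x 0 ∧ 0 ≤ x 1 ∧ 0 ≤ x 2 ∧ x 0 + x 1 + x 2 = 1}

/-- The random orbit `φ_n(x) = V_{θ_n} ∘ ⋯ ∘ V_{θ_1}(x)` driven by the sequence
`θ_1, θ_2, … = θs 0, θs 1, …`. -/
def phiRDS (θs : ℕ → ℝ) : ℕ → EuclideanSpace ℝ (Fin 3) → EuclideanSpace ℝ (Fin 3)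
  | 0, x => x
  | n+1, x => Vcso (θs n) (phiRDS θs n x)

/-- The vertex `e₁ = (1,0,0)`. -/
def e1 : EuclideanSpace ℝ (Fin 3) := WithLp.toLp 2 (![1, 0, 0] : Fin 3 → ℝ)

/-- The vertex `c = (1/2,1/2,0)`. -/
def cpt : EuclideanSpace ℝ (Fin 3) := WithLp.toLp 2 (![1/2, 1/2, 0] : Fin 3 → ℝ)

/-- The vertex `C = (1/3,1/3,1/3)`. -/
def Cpt : EuclideanSpace ℝ (Fin 3) := WithLp.toLp 2 (![1/3, 1/3, 1/3] : Fin 3 → ℝ)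

/-- `G₁ = {y ∈ Δ² : y₁ ≥ y₂ ≥ y₃}`. -/
def G1 : Set (EuclideanSpace ℝ (Fin 3)) :=
  {y ∈ simplex2 | y 0 ≥ y 1 ∧ y 1 ≥ y 2}

/-- The interior of `G₁`: `{y ∈ Δ² : y₁ > y₂ > y₃ > 0}`. -/
def intG1 : Set (EuclideanSpace ℝ (Fin 3)) :=
  {y ∈ simplex2 | y 0 > y 1 ∧ y 1 > y 2 ∧ y 2 > 0}

/-- The edge `M₁₂ = {y ∈ Δ² : y₁ = y₂ ≥ y₃}`. -/
def M12 : Set (EuclideanSpace ℝ (Fin 3)) :=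
  {y ∈ simplex2 | y 0 = y 1 ∧ y 1 ≥ y 2}

/-- The edge `M₂₃ = {y ∈ Δ² : y₁ ≥ y₂ = y₃}`. -/
def M23 : Set (EuclideanSpace ℝ (Fin 3)) :=
  {y ∈ simplex2 | y 0 ≥ y 1 ∧ y 1 = y 2}

/-- The edge `Γ₁₂ = {y ∈ Δ² : y₁ ≥ y₂, y₃ = 0}`. -/
def Gamma12 : Set (EuclideanSpace ℝ (Fin 3)) :=
  {y ∈ simplex2 | y 0 ≥ y 1 ∧ y 2 = 0}

/-- The seven fixed points `𝒜`. -/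
def fixedA : Set (EuclideanSpace ℝ (Fin 3)) :=
  {WithLp.toLp 2 (![1,0,0] : Fin 3 → ℝ), WithLp.toLp 2 (![0,1,0] : Fin 3 → ℝ), WithLp.toLp 2 (![0,0,1] : Fin 3 → ℝ), WithLp.toLp 2 (![1/2,1/2,0] : Fin 3 → ℝ), WithLp.toLp 2 (![1/2,0,1/2] : Fin 3 → ℝ), WithLp.toLp 2 (![0,1/2,1/2] : Fin 3 → ℝ), WithLp.toLp 2 (![1/3,1/3,1/3] : Fin 3 → ℝ)}

/-- Positive part of `log t`, valued in `ℝ≥0∞`. -/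
def logPos (t : ℝ) : ℝ≥0∞ := ENNReal.ofReal (Real.log t)

/-- Negative part of the extended logarithm (with `log 0 = -∞`), valued in `ℝ≥0∞`. -/
def logNeg (t : ℝ) : ℝ≥0∞ := if t ≤ 0 then ⊤ else ENNReal.ofReal (-Real.log t)

/-- `E log g(Θ) < 0` in the extended sense (the value `-∞` is allowed), where `Θ` has law `μ`:
the positive part of the extended expectation is strictly smaller than the negative part. -/
def expLogNeg (μ : Measure ℝ) (g : ℝ → ℝ) : Prop :=
  ∫⁻ θ, logPos (g θ) ∂μ < ∫⁻ θ, logNeg (g θ) ∂μ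

/-- `E log g(Θ) ≤ r` in the extended sense (the value `-∞` is allowed), where `Θ` has law `μ`. -/
def expLogLe (μ : Measure ℝ) (g : ℝ → ℝ) (r : ℝ) : Prop :=
  ∫⁻ θ, logPos (g θ) ∂μ + ENNReal.ofReal (-r) ≤ ∫⁻ θ, logNeg (g θ) ∂μ + ENNReal.ofReal r

/-- The topological support of a measure on `ℝ`: points all of whose open neighborhoods
have positive measure. -/
def measSupport (μ : Measure ℝ) : Set ℝ :=
  {t : ℝ | ∀ U : Set ℝ, IsOpen U → t ∈ U → 0 < μ U}

private lemma auxFix (θ a b c : ℝ) (hθ : θ ≠ 2/3) (hs : a + b + c = 1)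
    (e0 : a * (a^2 + 3*θ*a*(b+c) + 3*(1-θ)*(b^2+c^2) + 2*b*c) = a)
    (e1 : b * (b^2 + 3*θ*b*(c+a) + 3*(1-θ)*(c^2+a^2) + 2*c*a) = b)
    (e2 : c * (c^2 + 3*θ*c*(a+b) + 3*(1-θ)*(a^2+b^2) + 2*a*b) = c) :
    (a=1 ∧ b=0 ∧ c=0) ∨ (a=0 ∧ b=1 ∧ c=0) ∨ (a=0 ∧ b=0 ∧ c=1) ∨
    (a=1/2 ∧ b=1/2 ∧ c=0) ∨ (a=1/2 ∧ b=0 ∧ c=1/2) ∨ (a=0 ∧ b=1/2 ∧ c=1/2) ∨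
    (a=1/3 ∧ b=1/3 ∧ c=1/3) := by
  have hθ3 : (2:ℝ) - 3*θ ≠ 0 := fun h => hθ (by linarith)
  have h01 : (a-b) * ((a-b)^2+6*θ*a*b+3*θ*c*(a+b)+3*(1-θ)*c^2-1) = 0 := by
    linear_combination e0 - e1
  have h12 : (b-c) * ((b-c)^2+6*θ*b*c+3*θ*a*(b+c)+3*(1-θ)*a^2-1) = 0 := by
    linear_combination e1 - e2
  rcases mul_eq_zero.mp h01 with hab | hK1 <;> rcases mul_eq_zero.mp h12 with hbc | hK2
  · -- a = b, b = c
    have hab' : a = b := sub_eq_zero.mp hab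
    have hbc' : b = c := sub_eq_zero.mp hbc
    exact Or.inr <| Or.inr <| Or.inr <| Or.inr <| Or.inr <| Or.inr
      ⟨by linarith, by linarith, by linarith⟩
  · -- a = b, K2 = 0
    have hab' : a = b := sub_eq_zero.mp hab
    subst hab'
    have hc : c = 1 - 2*a := by linarith
    subst hc
    have hfa : (2 - 3*θ) * (a * (2*a - 1)) = 0 := by linear_combination (1/3) * hK2
    rcases mul_eq_zero.mp ((mul_eq_zero.mp hfa).resolve_left hθ3) with h | h
    · exact Or.inr <| Or.inr <| Or.inl ⟨h, h, by linarith⟩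
    · exact Or.inr <| Or.inr <| Or.inr <| Or.inl ⟨by linarith, by linarith, by linarith⟩
  · -- K1 = 0, b = c
    have hbc' : b = c := sub_eq_zero.mp hbc
    subst hbc'
    have ha : a = 1 - 2*b := by linarith
    subst ha
    have hfb : (2 - 3*θ) * (b * (2*b - 1)) = 0 := by linear_combination (1/3) * hK1
    rcases mul_eq_zero.mp ((mul_eq_zero.mp hfb).resolve_left hθ3) with h | h
    · exact Or.inl ⟨by linarith, h, h⟩
    · exact Or.inr <| Or.inr <| Or.inr <| Or.inr <| Or.inr <| Or.inl
        ⟨by linarith, by linarith, by linarith⟩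
  · -- K1 = 0, K2 = 0
    have hac : (2 - 3*θ) * (a - c) = 0 := by
      linear_combination hK2 - hK1 + (3*θ - 2)*(a-c)*hs
    have hac' : a = c := sub_eq_zero.mp ((mul_eq_zero.mp hac).resolve_left hθ3)
    subst hac'
    have hb : b = 1 - 2*a := by linarith
    subst hb
    have hfa : (2 - 3*θ) * (a * (2*a - 1)) = 0 := by linear_combination (1/3) * hK1
    rcases mul_eq_zero.mp ((mul_eq_zero.mp hfa).resolve_left hθ3) with h | h
    · exact Or.inr <| Or.inl ⟨h, by linarith, h⟩
    · exact Or.inr <| Or.inr <| Or.inr <| Or.inr <| Or.inl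
        ⟨by linarith, by linarith, by linarith⟩

private lemma auxInv (θ a b c : ℝ) (hθ0 : 0 ≤ θ) (hθ1 : θ ≤ 1)
    (ha : 0 ≤ a) (hb : 0 ≤ b) (hc : 0 ≤ c) (hs : a + b + c = 1)
    (hab : b ≤ a) (hbc : c ≤ b) :
    0 ≤ a * (a^2 + 3*θ*a*(b+c) + 3*(1-θ)*(b^2+c^2) + 2*b*c) ∧
    0 ≤ b * (b^2 + 3*θ*b*(c+a) + 3*(1-θ)*(c^2+a^2) + 2*c*a) ∧
    0 ≤ c * (c^2 + 3*θ*c*(a+b) + 3*(1-θ)*(a^2+b^2) + 2*a*b) ∧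
    a * (a^2 + 3*θ*a*(b+c) + 3*(1-θ)*(b^2+c^2) + 2*b*c) +
      b * (b^2 + 3*θ*b*(c+a) + 3*(1-θ)*(c^2+a^2) + 2*c*a) +
      c * (c^2 + 3*θ*c*(a+b) + 3*(1-θ)*(a^2+b^2) + 2*a*b) = 1 ∧
    b * (b^2 + 3*θ*b*(c+a) + 3*(1-θ)*(c^2+a^2) + 2*c*a) ≤
      a * (a^2 + 3*θ*a*(b+c) + 3*(1-θ)*(b^2+c^2) + 2*b*c) ∧
    c * (c^2 + 3*θ*c*(a+b) + 3*(1-θ)*(a^2+b^2) + 2*a*b) ≤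
      b * (b^2 + 3*θ*b*(c+a) + 3*(1-θ)*(c^2+a^2) + 2*c*a) := by
  have hθ' : 0 ≤ 1 - θ := by linarith
  refine ⟨?_, ?_, ?_, ?_, ?_, ?_⟩
  · have : 0 ≤ a^2 + 3*θ*a*(b+c) + 3*(1-θ)*(b^2+c^2) + 2*b*c := by
      nlinarith [sq_nonneg a, mul_nonneg (mul_nonneg hθ0 ha) (add_nonneg hb hc),
        mul_nonneg hθ' (add_nonneg (sq_nonneg b) (sq_nonneg c)), mul_nonneg hb hc]
    exact mul_nonneg ha this
  · have : 0 ≤ b^2 + 3*θ*b*(c+a) + 3*(1-θ)*(c^2+a^2) + 2*c*a := by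
      nlinarith [sq_nonneg b, mul_nonneg (mul_nonneg hθ0 hb) (add_nonneg hc ha),
        mul_nonneg hθ' (add_nonneg (sq_nonneg c) (sq_nonneg a)), mul_nonneg hc ha]
    exact mul_nonneg hb this
  · have : 0 ≤ c^2 + 3*θ*c*(a+b) + 3*(1-θ)*(a^2+b^2) + 2*a*b := by
      nlinarith [sq_nonneg c, mul_nonneg (mul_nonneg hθ0 hc) (add_nonneg ha hb),
        mul_nonneg hθ' (add_nonneg (sq_nonneg a) (sq_nonneg b)), mul_nonneg ha hb]
    exact mul_nonneg hc this
  · linear_combination ((a+b+c)^2 + (a+b+c) + 1) * hs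
  · have hbr : 0 ≤ (a-b)^2 + 6*θ*a*b + 3*θ*c*(a+b) + 3*(1-θ)*c^2 := by
      nlinarith [sq_nonneg (a-b), mul_nonneg (mul_nonneg hθ0 ha) hb,
        mul_nonneg (mul_nonneg hθ0 hc) (add_nonneg ha hb), mul_nonneg hθ' (sq_nonneg c)]
    nlinarith [mul_nonneg (sub_nonneg.mpr hab) hbr]
  · have hbr : 0 ≤ (b-c)^2 + 6*θ*b*c + 3*θ*a*(b+c) + 3*(1-θ)*a^2 := by
      nlinarith [sq_nonneg (b-c), mul_nonneg (mul_nonneg hθ0 hb) hc,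
        mul_nonneg (mul_nonneg hθ0 ha) (add_nonneg hb hc), mul_nonneg hθ' (sq_nonneg a)]
    nlinarith [mul_nonneg (sub_nonneg.mpr hbc) hbr]

private lemma vecEq (y : EuclideanSpace ℝ (Fin 3)) (v0 v1 v2 : ℝ)
    (h0 : y 0 = v0) (h1 : y 1 = v1) (h2 : y 2 = v2) : y = WithLp.toLp 2 ![v0, v1, v2] := by
  ext i
  fin_cases i <;> simpa

/-- G₁ is invariant under each V_θ, and for θ ≠ 2/3 the fixed point set of V_θ on Δ²
is exactly 𝒜. -/
theorem G1_invariant_and_fixed_points :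
    (∀ θ ∈ Set.Icc (0:ℝ) 1, ∀ x ∈ G1, Vcso θ x ∈ G1) ∧
    (∀ θ ∈ Set.Icc (0:ℝ) 1, θ ≠ 2/3 → {x ∈ simplex2 | Vcso θ x = x} = fixedA) := by
  constructor
  · intro θ hθ x hx
    obtain ⟨⟨ha, hb, hc, hs⟩, hab, hbc⟩ := hx
    obtain ⟨p0, p1, p2, psum, pab, pbc⟩ :=
      auxInv θ (x 0) (x 1) (x 2) hθ.1 hθ.2 ha hb hc hs hab hbc
    have v0 : Vcso θ x 0 = x 0 * ((x 0)^2 + 3*θ*(x 0)*(x 1 + x 2)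
        + 3*(1-θ)*((x 1)^2 + (x 2)^2) + 2*(x 1)*(x 2)) := rfl
    have v1 : Vcso θ x 1 = x 1 * ((x 1)^2 + 3*θ*(x 1)*(x 2 + x 0)
        + 3*(1-θ)*((x 2)^2 + (x 0)^2) + 2*(x 2)*(x 0)) := rfl
    have v2 : Vcso θ x 2 = x 2 * ((x 2)^2 + 3*θ*(x 2)*(x 0 + x 1)
        + 3*(1-θ)*((x 0)^2 + (x 1)^2) + 2*(x 0)*(x 1)) := rfl
    exact ⟨⟨by rw [v0]; exact p0, by rw [v1]; exact p1, by rw [v2]; exact p2,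
      by rw [v0, v1, v2]; exact psum⟩, by rw [v0, v1]; exact pab, by rw [v1, v2]; exact pbc⟩
  · intro θ hθ hθ23
    ext y
    simp only [Set.mem_sep_iff, simplex2, Set.mem_setOf_eq, fixedA, Set.mem_insert_iff,
      Set.mem_singleton_iff]
    constructor
    · rintro ⟨⟨ha, hb, hc, hs⟩, hfix⟩
      have hfix' : ∀ i, Vcso θ y i = y i := fun i => congrArg (fun v => v i) hfix
      have e0 : y 0 * ((y 0)^2 + 3*θ*(y 0)*(y 1 + y 2)
          + 3*(1-θ)*((y 1)^2 + (y 2)^2) + 2*(y 1)*(y 2)) = y 0 := hfix' 0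
      have e1 : y 1 * ((y 1)^2 + 3*θ*(y 1)*(y 2 + y 0)
          + 3*(1-θ)*((y 2)^2 + (y 0)^2) + 2*(y 2)*(y 0)) = y 1 := hfix' 1
      have e2 : y 2 * ((y 2)^2 + 3*θ*(y 2)*(y 0 + y 1)
          + 3*(1-θ)*((y 0)^2 + (y 1)^2) + 2*(y 0)*(y 1)) = y 2 := hfix' 2
      rcases auxFix θ (y 0) (y 1) (y 2) hθ23 hs e0 e1 e2 with
        ⟨h0, h1, h2⟩ | ⟨h0, h1, h2⟩ | ⟨h0, h1, h2⟩ | ⟨h0, h1, h2⟩ | ⟨h0, h1, h2⟩ |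
        ⟨h0, h1, h2⟩ | ⟨h0, h1, h2⟩
      · exact Or.inl (vecEq y _ _ _ h0 h1 h2)
      · exact Or.inr <| Or.inl (vecEq y _ _ _ h0 h1 h2)
      · exact Or.inr <| Or.inr <| Or.inl (vecEq y _ _ _ h0 h1 h2)
      · exact Or.inr <| Or.inr <| Or.inr <| Or.inl (vecEq y _ _ _ h0 h1 h2)
      · exact Or.inr <| Or.inr <| Or.inr <| Or.inr <| Or.inl (vecEq y _ _ _ h0 h1 h2)
      · exact Or.inr <| Or.inr <| Or.inr <| Or.inr <| Or.inr <| Or.inl (vecEq y _ _ _ h0 h1 h2)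
      · exact Or.inr <| Or.inr <| Or.inr <| Or.inr <| Or.inr <| Or.inr (vecEq y _ _ _ h0 h1 h2)
    · rintro (rfl | rfl | rfl | rfl | rfl | rfl | rfl) <;>
        refine ⟨⟨by norm_num [Matrix.cons_val_two, Matrix.vecHead, Matrix.vecTail], by norm_num [Matrix.cons_val_two, Matrix.vecHead, Matrix.vecTail], by norm_num [Matrix.cons_val_two, Matrix.vecHead, Matrix.vecTail], by norm_num [Matrix.cons_val_two, Matrix.vecHead, Matrix.vecTail]⟩, ?_⟩ <;>
        · ext i
          fin_cases i <;> · show _ * _ = _; norm_num [Matrix.cons_val_two, Matrix.vecHead, Matrix.vecTail]; try ring
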